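/- For the canonical Okubo system of type (III)_{2n+1} with K_{ij} = ∏_{k≠i,1≤k≤n+1}(α_k + β_j − ρ_1 − ρ_2) / ∏_{k≠j,1≤k≤n}(β_j − β_k) and L_{ij} = (α_j − ρ_1)(α_j − ρ_2) ∏_{k≠i,1≤k≤n}(α_j + β_k − ρ_1 − ρ_2) / ∏_{k≠j,1≤k≤n+1}(α_j − α_k), the (n+1)×(n+1) matrix α − ρ_2 − K(β − ρ_2)^{-1}L has rank 1 and equals ξη with ξ_i = ∏_{k≠i,1≤k≤n+1}(α_k − ρ_1) / ∏_{k=1}^n(ρ_2 − β_k) and η_j = (α_j − ρ_2) ∏_{k=1}^n(β_k + α_j − ρ_1 − ρ_2) / ∏_{k≠j,1≤k≤n+1}(α_j − α_k). -/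

import Mathlib

open Polynomial Finset

private lemma prod_neg' {ι : Type*} (s : Finset ι) (f : ι → ℂ) :
    ∏ k ∈ s, (-(f k)) = (-1 : ℂ) ^ s.card * ∏ k ∈ s, f k := by
  rw [← Finset.prod_const (-1 : ℂ), ← Finset.prod_mul_distrib]
  exact Finset.prod_congr rfl fun k _ => by ring

private lemma lagrange_sum (n : ℕ) (β : Fin n → ℂ) (hβ : Function.Injective β)
    (ρ2 : ℂ) (hρ2 : ∀ k, ρ2 ≠ β k) (g : ℂ[X]) (hg : g.natDegree ≤ n) (y : ℂ) :
    (∏ k, (ρ2 - β k)) * ((y - ρ2) * ∑ l, g.eval (β l) /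
        ((β l - ρ2) * ∏ k ∈ Finset.univ.erase l, (β l - β k)) *
        ∏ k ∈ Finset.univ.erase l, (y - β k))
      = g.eval y * ∏ k, (ρ2 - β k) - g.eval ρ2 * ∏ k, (y - β k) := by
  classical
  have hWρ : (∏ k, (ρ2 - β k)) ≠ 0 :=
    Finset.prod_ne_zero_iff.2 fun k _ => sub_ne_zero.2 (hρ2 k)
  set c : Fin n → ℂ := fun l => (∏ k, (ρ2 - β k)) * (g.eval (β l) /
      ((β l - ρ2) * ∏ k ∈ Finset.univ.erase l, (β l - β k))) with hc
  set A : ℂ[X] := ∑ l, C (c l) *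
      ((X - C ρ2) * ∏ k ∈ Finset.univ.erase l, (X - C (β k))) with hA
  set B : ℂ[X] := C (∏ k, (ρ2 - β k)) * g - C (g.eval ρ2) * ∏ k, (X - C (β k)) with hB
  have hevalA : ∀ z : ℂ, A.eval z =
      ∑ l, c l * ((z - ρ2) * ∏ k ∈ Finset.univ.erase l, (z - β k)) := by
    intro z
    rw [hA, Polynomial.eval_finset_sum]
    refine Finset.sum_congr rfl fun l _ => ?_
    simp [Polynomial.eval_prod]
  have hevalB : ∀ z : ℂ, B.eval z =
      (∏ k, (ρ2 - β k)) * g.eval z - g.eval ρ2 * ∏ k, (z - β k) := by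
    intro z
    simp [hB, Polynomial.eval_prod]
  have hdegprod : ∀ (s : Finset (Fin n)),
      (∏ k ∈ s, (X - C (β k)) : ℂ[X]).natDegree = s.card := by
    intro s
    rw [Polynomial.natDegree_prod_of_monic _ _ (fun k _ => Polynomial.monic_X_sub_C _)]
    simp [Polynomial.natDegree_X_sub_C]
  have hAB : A = B := by
    have hdegA : A.natDegree ≤ n := by
      apply Polynomial.natDegree_sum_le_of_forall_le
      intro l _
      refine (Polynomial.natDegree_mul_le).trans ?_
      have h2 := Polynomial.natDegree_mul_le (p := (X - C ρ2 : ℂ[X]))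
        (q := ∏ k ∈ Finset.univ.erase l, (X - C (β k)))
      rw [hdegprod, Polynomial.natDegree_X_sub_C] at h2
      have hcard : (Finset.univ.erase l).card = n - 1 := by
        simp [Finset.card_erase_of_mem]
      have hl : 0 < n := l.pos
      rw [hcard] at h2
      simp only [Polynomial.natDegree_C, zero_add]
      omega
    have hdegB : B.natDegree ≤ n := by
      refine (Polynomial.natDegree_sub_le _ _).trans ?_
      refine max_le ((Polynomial.natDegree_mul_le).trans ?_)
        ((Polynomial.natDegree_mul_le).trans ?_)
      · simp only [Polynomial.natDegree_C, zero_add]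
        exact hg
      · rw [hdegprod]
        simp
    have key : A - B = 0 := by
      apply Polynomial.eq_zero_of_natDegree_lt_card_of_eval_eq_zero' (A - B)
        (insert ρ2 (Finset.univ.image β))
      · intro x hx
        rw [Polynomial.eval_sub, hevalA, hevalB]
        rcases Finset.mem_insert.1 hx with rfl | hx
        · rw [Finset.sum_eq_zero (fun l _ => by rw [sub_self]; ring)]
          ring
        · rcases Finset.mem_image.1 hx with ⟨m, _, rfl⟩
          have hne1 : β m - ρ2 ≠ 0 := sub_ne_zero.2 fun h => hρ2 m h.symm
          have hne2 : (∏ k ∈ Finset.univ.erase m, (β m - β k)) ≠ 0 :=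
            Finset.prod_ne_zero_iff.2 fun k hk =>
              sub_ne_zero.2 fun h => (Finset.mem_erase.1 hk).1 (hβ h.symm)
          have hWm : (∏ k, (β m - β k)) = 0 :=
            Finset.prod_eq_zero (Finset.mem_univ m) (by ring)
          rw [hWm, Finset.sum_eq_single m]
          · rw [hc]
            field_simp
            ring
          · intro l _ hlm
            have h0 : (∏ k ∈ Finset.univ.erase l, (β m - β k)) = 0 :=
              Finset.prod_eq_zero (Finset.mem_erase.2 ⟨hlm.symm, Finset.mem_univ m⟩) (by ring)
            rw [h0]
            ring
          · intro h; exact absurd (Finset.mem_univ m) h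
      · have hcard : (insert ρ2 (Finset.univ.image β)).card = n + 1 := by
          rw [Finset.card_insert_of_notMem, Finset.card_image_of_injective _ hβ,
            Finset.card_univ, Fintype.card_fin]
          intro hmem
          rcases Finset.mem_image.1 hmem with ⟨k, _, hk⟩
          exact hρ2 k hk.symm
        rw [hcard]
        have := Polynomial.natDegree_sub_le A B
        omega
    exact sub_eq_zero.1 key
  have hev := congrArg (Polynomial.eval y) hAB
  rw [hevalA, hevalB] at hev
  calc (∏ k, (ρ2 - β k)) * ((y - ρ2) * ∑ l, g.eval (β l) /
        ((β l - ρ2) * ∏ k ∈ Finset.univ.erase l, (β l - β k)) *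
        ∏ k ∈ Finset.univ.erase l, (y - β k))
      = ∑ l, c l * ((y - ρ2) * ∏ k ∈ Finset.univ.erase l, (y - β k)) := by
        rw [Finset.mul_sum, Finset.mul_sum]
        exact Finset.sum_congr rfl fun l _ => by rw [hc]; ring
    _ = (∏ k, (ρ2 - β k)) * g.eval y - g.eval ρ2 * ∏ k, (y - β k) := hev
    _ = g.eval y * ∏ k, (ρ2 - β k) - g.eval ρ2 * ∏ k, (y - β k) := by ring

/-- Lemma 5.2 (2) of the paper: for the canonical Okubo system of type (III)_{2n+1},
the matrix `α − ρ₂ − L(β − ρ₂)⁻¹ K` equals the rank-one matrix `ξη`,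
stated as the entrywise identity. -/
theorem stmt_10 (n : ℕ) (α : Fin (n + 1) → ℂ) (β : Fin n → ℂ) (ρ1 ρ2 ρ3 : ℂ)
    (hα : Function.Injective α) (hβ : Function.Injective β)
    (hρ2 : ∀ k, ρ2 ≠ β k)
    (hFuchs : (∑ i, α i) + ∑ i, β i = (n : ℂ) * ρ1 + (n : ℂ) * ρ2 + ρ3) :
    ∀ i j : Fin (n + 1),
      (α i - ρ2) * (if i = j then 1 else 0) -
        ∑ l : Fin n,
          ((∏ k ∈ Finset.univ.erase i, (α k + β l - ρ1 - ρ2)) /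
              ∏ k ∈ Finset.univ.erase l, (β l - β k)) *
            ((α j - ρ1) * (α j - ρ2) *
                (∏ k ∈ Finset.univ.erase l, (α j + β k - ρ1 - ρ2)) /
              ∏ k ∈ Finset.univ.erase j, (α j - α k)) / (β l - ρ2) =
      ((∏ k ∈ Finset.univ.erase i, (α k - ρ1)) / ∏ k : Fin n, (ρ2 - β k)) *
        ((α j - ρ2) * (∏ k : Fin n, (β k + α j - ρ1 - ρ2)) /
          ∏ k ∈ Finset.univ.erase j, (α j - α k)) := by
  classical
  intro i j
  have hWρ : (∏ k : Fin n, (ρ2 - β k)) ≠ 0 :=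
    Finset.prod_ne_zero_iff.2 fun k _ => sub_ne_zero.2 (hρ2 k)
  have hDj : (∏ k ∈ Finset.univ.erase j, (α j - α k)) ≠ 0 :=
    Finset.prod_ne_zero_iff.2 fun k hk =>
      sub_ne_zero.2 fun h => (Finset.mem_erase.1 hk).1 (hα h).symm
  set g : Polynomial ℂ := ∏ k ∈ Finset.univ.erase i, (X + C (α k - ρ1 - ρ2)) with hgdef
  have hgdeg : g.natDegree = n := by
    rw [hgdef, Polynomial.natDegree_prod_of_monic _ _
      (fun k _ => Polynomial.monic_X_add_C _)]
    calc ∑ k ∈ Finset.univ.erase i, (X + C (α k - ρ1 - ρ2) : Polynomial ℂ).natDegree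
        = ∑ _k ∈ Finset.univ.erase i, 1 :=
          Finset.sum_congr rfl fun k _ => Polynomial.natDegree_X_add_C _
      _ = n := by simp [Finset.card_erase_of_mem]
  have hgl : ∀ z : ℂ, g.eval z = ∏ k ∈ Finset.univ.erase i, (α k + z - ρ1 - ρ2) := by
    intro z
    rw [hgdef, Polynomial.eval_prod]
    exact Finset.prod_congr rfl fun k _ => by
      simp only [Polynomial.eval_add, Polynomial.eval_X, Polynomial.eval_C]; ring
  have hgy : g.eval (ρ1 + ρ2 - α j) = ∏ k ∈ Finset.univ.erase i, (α k - α j) := by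
    rw [hgl]; exact Finset.prod_congr rfl fun k _ => by ring
  have hgρ : g.eval ρ2 = ∏ k ∈ Finset.univ.erase i, (α k - ρ1) := by
    rw [hgl]; exact Finset.prod_congr rfl fun k _ => by ring
  have hL := lagrange_sum n β hβ ρ2 hρ2 g hgdeg.le (ρ1 + ρ2 - α j)
  have hWy : (∏ k : Fin n, (ρ1 + ρ2 - α j - β k))
      = (-1 : ℂ) ^ n * ∏ k : Fin n, (β k + α j - ρ1 - ρ2) := by
    calc (∏ k : Fin n, (ρ1 + ρ2 - α j - β k))
        = ∏ k : Fin n, (-(β k + α j - ρ1 - ρ2)) :=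
          Finset.prod_congr rfl fun k _ => by ring
      _ = (-1 : ℂ) ^ n * ∏ k : Fin n, (β k + α j - ρ1 - ρ2) := by
          rw [prod_neg']; simp
  have hsval : ((-1 : ℂ)) ^ n = 1 ∨ ((-1 : ℂ)) ^ n = -1 := by
    rcases Nat.even_or_odd n with h | h
    exacts [Or.inl h.neg_one_pow, Or.inr h.neg_one_pow]
  -- rewrite the sum using the Lagrange sum
  have hsum : (∑ l : Fin n,
        ((∏ k ∈ Finset.univ.erase i, (α k + β l - ρ1 - ρ2)) /
            ∏ k ∈ Finset.univ.erase l, (β l - β k)) *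
          ((α j - ρ1) * (α j - ρ2) *
              (∏ k ∈ Finset.univ.erase l, (α j + β k - ρ1 - ρ2)) /
            ∏ k ∈ Finset.univ.erase j, (α j - α k)) / (β l - ρ2))
      = ((α j - ρ2) * (-1 : ℂ) ^ n / ∏ k ∈ Finset.univ.erase j, (α j - α k)) *
        ((ρ1 + ρ2 - α j - ρ2) * ∑ l : Fin n, g.eval (β l) /
          ((β l - ρ2) * ∏ k ∈ Finset.univ.erase l, (β l - β k)) *
          ∏ k ∈ Finset.univ.erase l, (ρ1 + ρ2 - α j - β k)) := by
    rw [Finset.mul_sum, Finset.mul_sum]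
    refine Finset.sum_congr rfl fun l _ => ?_
    have hβl : β l - ρ2 ≠ 0 := sub_ne_zero.2 fun h => hρ2 l h.symm
    have hDl : (∏ k ∈ Finset.univ.erase l, (β l - β k)) ≠ 0 :=
      Finset.prod_ne_zero_iff.2 fun k hk =>
        sub_ne_zero.2 fun h => (Finset.mem_erase.1 hk).1 (hβ h).symm
    have hPl : (∏ k ∈ Finset.univ.erase l, (ρ1 + ρ2 - α j - β k))
        = (-1 : ℂ) ^ (n - 1) * ∏ k ∈ Finset.univ.erase l, (α j + β k - ρ1 - ρ2) := by
      calc (∏ k ∈ Finset.univ.erase l, (ρ1 + ρ2 - α j - β k))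
          = ∏ k ∈ Finset.univ.erase l, (-(α j + β k - ρ1 - ρ2)) :=
            Finset.prod_congr rfl fun k _ => by ring
        _ = (-1 : ℂ) ^ (n - 1) * ∏ k ∈ Finset.univ.erase l, (α j + β k - ρ1 - ρ2) := by
            rw [prod_neg']
            congr 2
            simp [Finset.card_erase_of_mem]
    have ht : ((-1 : ℂ)) ^ (n - 1) = -((-1 : ℂ)) ^ n := by
      have hmul : ((-1 : ℂ)) ^ (n - 1) * (-1) = ((-1 : ℂ)) ^ n := by
        rw [← pow_succ]
        congr 1
        have := l.pos
        omega
      linear_combination -hmul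
    rw [hgl, hPl, ht]
    rcases hsval with h | h <;> rw [h] <;> field_simp <;> ring
  rw [hsum]
  have hTval : (ρ1 + ρ2 - α j - ρ2) * (∑ l : Fin n, g.eval (β l) /
        ((β l - ρ2) * ∏ k ∈ Finset.univ.erase l, (β l - β k)) *
        ∏ k ∈ Finset.univ.erase l, (ρ1 + ρ2 - α j - β k))
      = (g.eval (ρ1 + ρ2 - α j) * (∏ k : Fin n, (ρ2 - β k)) -
          g.eval ρ2 * ((-1 : ℂ) ^ n * ∏ k : Fin n, (β k + α j - ρ1 - ρ2))) /
        ∏ k : Fin n, (ρ2 - β k) := by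
    rw [eq_div_iff hWρ]
    linear_combination hL - g.eval ρ2 * hWy
  rw [hTval, hgy, hgρ]
  set D : ℂ := ∏ k ∈ Finset.univ.erase j, (α j - α k) with hD
  set W : ℂ := ∏ k : Fin n, (ρ2 - β k) with hW
  set G : ℂ := ∏ k ∈ Finset.univ.erase i, (α k - ρ1) with hG
  set Q : ℂ := ∏ k : Fin n, (β k + α j - ρ1 - ρ2) with hQ
  rcases eq_or_ne i j with rfl | hij
  · rw [if_pos rfl]
    have hprod : (∏ k ∈ Finset.univ.erase i, (α k - α i))
        = (-1 : ℂ) ^ n * ∏ k ∈ Finset.univ.erase i, (α i - α k) := by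
      calc (∏ k ∈ Finset.univ.erase i, (α k - α i))
          = ∏ k ∈ Finset.univ.erase i, (-(α i - α k)) :=
            Finset.prod_congr rfl fun k _ => by ring
        _ = (-1 : ℂ) ^ n * ∏ k ∈ Finset.univ.erase i, (α i - α k) := by
            rw [prod_neg']
            congr 2
            simp [Finset.card_erase_of_mem]
    rw [hprod, ← hD]
    rcases hsval with h | h <;> rw [h] <;> field_simp <;> ring
  · rw [if_neg hij]
    have h0 : (∏ k ∈ Finset.univ.erase i, (α k - α j)) = 0 :=
      Finset.prod_eq_zero (Finset.mem_erase.2 ⟨hij.symm, Finset.mem_univ j⟩) (sub_self _)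
    rw [h0]
    rcases hsval with h | h <;> rw [h] <;> field_simp <;> ring
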